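/- Let [·] be an odd function satisfying the Riemann relation, δ ∈ ℂ, m ≥ 1, x₁,…,x_m ∈ ℂ and μ₁,…,μ_m ∈ ℕ. Define the shifted factorial [u]_k = [u][u+δ]⋯[u+(k-1)δ]. Then, assuming all factors involved are nonzero, ∏_{1 ≤ i ≠ j ≤ m} [x_i - x_j - μ_j δ]_{μ_i} / [x_i - x_j + δ]_{μ_i} = ∏_{1 ≤ i < j ≤ m} [x_i - x_j] / [(x_i + μ_i δ) - (x_j + μ_j δ)]. -/

import Mathlib

open Finset

/-- The shifted factorial `[u]_k = [u][u+δ]⋯[u+(k-1)δ]`. -/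
noncomputable def shiftedFac (f : ℂ → ℂ) (δ : ℂ) (u : ℂ) (k : ℕ) : ℂ :=
  ∏ r ∈ Finset.range k, f (u + (r : ℂ) * δ)

lemma pair_identity (f : ℂ → ℂ) (hodd : ∀ u : ℂ, f (-u) = -f u)
    (δ d : ℂ) (a b : ℕ)
    (hB : ∀ r : ℕ, r < a → f (d + δ + (r : ℂ) * δ) ≠ 0)
    (hD : ∀ r : ℕ, r < b → f (-d + δ + (r : ℂ) * δ) ≠ 0)
    (hQa : f (d + ((a : ℂ) - b) * δ) ≠ 0) :
    shiftedFac f δ (d - (b : ℂ) * δ) a / shiftedFac f δ (d + δ) a *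
      (shiftedFac f δ (-d - (a : ℂ) * δ) b / shiftedFac f δ (-d + δ) b) =
    f d / f (d + ((a : ℂ) - b) * δ) := by
  have negprod : ∀ (n : ℕ) (F : ℕ → ℂ),
      (∏ r ∈ range n, -F r) = (-1) ^ n * ∏ r ∈ range n, F r := by
    intro n F
    induction n with
    | zero => simp
    | succ n ih => rw [Finset.prod_range_succ, Finset.prod_range_succ, ih]; ring
  set Q : ℕ → ℂ := fun s => f (d + ((s : ℂ) - b) * δ) with hQ
  have eA : shiftedFac f δ (d - (b : ℂ) * δ) a = ∏ r ∈ range a, Q r := by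
    refine Finset.prod_congr rfl fun r _ => ?_
    simp only [hQ]; congr 1; ring
  have eB : shiftedFac f δ (d + δ) a = ∏ r ∈ range a, Q (b + 1 + r) := by
    refine Finset.prod_congr rfl fun r _ => ?_
    simp only [hQ]; push_cast; congr 1; ring
  have eC : shiftedFac f δ (-d - (a : ℂ) * δ) b
      = (-1) ^ b * ∏ r ∈ range b, Q (a + 1 + r) := by
    have step : ∀ r ∈ range b, f (-d - (a : ℂ) * δ + (r : ℂ) * δ) = -Q (a + b - r) := by
      intro r hr
      rw [mem_range] at hr
      have hcast : ((a + b - r : ℕ) : ℂ) = (a : ℂ) + b - r := by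
        push_cast [Nat.cast_sub (by omega : r ≤ a + b)]; ring
      rw [show -d - (a : ℂ) * δ + (r : ℂ) * δ
            = -(d + (((a + b - r : ℕ) : ℂ) - b) * δ) by rw [hcast]; ring, hodd]
    refine (Finset.prod_congr rfl step).trans ?_
    rw [negprod b (fun r => Q (a + b - r))]
    congr 1
    rw [← Finset.prod_range_reflect (fun j => Q (a + 1 + j)) b]
    refine Finset.prod_congr rfl fun r hr => ?_
    rw [mem_range] at hr
    congr 1; omega
  have eD : shiftedFac f δ (-d + δ) b = (-1) ^ b * ∏ r ∈ range b, Q r := by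
    have step : ∀ r ∈ range b, f (-d + δ + (r : ℂ) * δ) = -Q (b - 1 - r) := by
      intro r hr
      rw [mem_range] at hr
      have hcast : ((b - 1 - r : ℕ) : ℂ) = (b : ℂ) - 1 - r := by
        push_cast [Nat.cast_sub (by omega : r ≤ b - 1), Nat.cast_sub (by omega : 1 ≤ b)]
        ring
      rw [show -d + δ + (r : ℂ) * δ
            = -(d + (((b - 1 - r : ℕ) : ℂ) - b) * δ) by rw [hcast]; ring, hodd]
    refine (Finset.prod_congr rfl step).trans ?_
    rw [negprod b (fun r => Q (b - 1 - r))]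
    rw [Finset.prod_range_reflect Q b]
  have hQd : Q b = f d := by simp [hQ]
  have hQab : Q a = f (d + ((a : ℂ) - b) * δ) := rfl
  -- key telescoping identity
  have key : (∏ r ∈ range a, Q r) * Q a * ∏ r ∈ range b, Q (a + 1 + r)
      = (∏ r ∈ range b, Q r) * Q b * ∏ r ∈ range a, Q (b + 1 + r) := by
    rw [← Finset.prod_range_succ Q a, ← Finset.prod_range_succ Q b,
      ← Finset.prod_range_add Q (a + 1) b, ← Finset.prod_range_add Q (b + 1) a,
      show a + 1 + b = b + 1 + a from by omega]
  have hBne : (∏ r ∈ range a, Q (b + 1 + r)) ≠ 0 := by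
    rw [← eB]
    exact Finset.prod_ne_zero_iff.2 fun r hr => hB r (mem_range.1 hr)
  have hDne : (∏ r ∈ range b, Q r) ≠ 0 := by
    have : shiftedFac f δ (-d + δ) b ≠ 0 :=
      Finset.prod_ne_zero_iff.2 fun r hr => hD r (mem_range.1 hr)
    rw [eD] at this
    exact right_ne_zero_of_mul this
  rw [eA, eB, eC, eD, ← hQd, ← hQab]
  have hsgn : ((-1 : ℂ)) ^ b ≠ 0 := pow_ne_zero _ (by norm_num)
  have hQa' : Q a ≠ 0 := hQab ▸ hQa
  field_simp
  linear_combination key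

theorem principal_specialization_product (f : ℂ → ℂ)
    (hodd : ∀ u : ℂ, f (-u) = -f u)
    (hR : ∀ x y u v : ℂ,
      f (x + u) * f (x - u) * (f (y + v) * f (y - v)) -
        f (x + v) * f (x - v) * (f (y + u) * f (y - u)) =
      f (x + y) * f (x - y) * (f (u + v) * f (u - v)))
    (δ : ℂ) (m : ℕ) (hm : 1 ≤ m) (x : Fin m → ℂ) (μ : Fin m → ℕ)
    (hne1 : ∀ i j : Fin m, i ≠ j → ∀ r : ℕ, r < μ i →
      f (x i - x j - (μ j : ℂ) * δ + (r : ℂ) * δ) ≠ 0)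
    (hne2 : ∀ i j : Fin m, i ≠ j → ∀ r : ℕ, r < μ i →
      f (x i - x j + δ + (r : ℂ) * δ) ≠ 0)
    (hne3 : ∀ i j : Fin m, i ≠ j →
      f ((x i + (μ i : ℂ) * δ) - (x j + (μ j : ℂ) * δ)) ≠ 0)
    (hne4 : ∀ i j : Fin m, i ≠ j → f (x i - x j) ≠ 0) :
    (∏ i, ∏ j ∈ univ.erase i,
        shiftedFac f δ (x i - x j - (μ j : ℂ) * δ) (μ i) /
          shiftedFac f δ (x i - x j + δ) (μ i)) =
      ∏ i, ∏ j ∈ Ioi i,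
        f (x i - x j) / f ((x i + (μ i : ℂ) * δ) - (x j + (μ j : ℂ) * δ)) := by
  classical
  set g : Fin m → Fin m → ℂ := fun i j =>
    shiftedFac f δ (x i - x j - (μ j : ℂ) * δ) (μ i) /
      shiftedFac f δ (x i - x j + δ) (μ i) with hg
  have hsplit : ∀ i : Fin m, (univ.erase i) = Iio i ∪ Ioi i := by
    intro i; ext j
    simp only [mem_erase, mem_univ, and_true, mem_union, mem_Iio, mem_Ioi]
    exact lt_or_lt_iff_ne.symm
  have hdisj : ∀ i : Fin m, Disjoint (Iio i) (Ioi i) := by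
    intro i
    simp only [Finset.disjoint_left, mem_Iio, mem_Ioi]
    exact fun j h1 h2 => absurd (h1.trans h2) (lt_irrefl j)
  calc (∏ i, ∏ j ∈ univ.erase i, g i j)
      = ∏ i, ((∏ j ∈ Iio i, g i j) * ∏ j ∈ Ioi i, g i j) := by
        refine Finset.prod_congr rfl fun i _ => ?_
        rw [hsplit i, Finset.prod_union (hdisj i)]
    _ = (∏ i, ∏ j ∈ Iio i, g i j) * ∏ i, ∏ j ∈ Ioi i, g i j := by
        rw [Finset.prod_mul_distrib]
    _ = (∏ i, ∏ j ∈ Ioi i, g j i) * ∏ i, ∏ j ∈ Ioi i, g i j := by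
        congr 1
        exact Finset.prod_comm' (by
          intro i j
          simp only [mem_univ, mem_Iio, mem_Ioi, true_and, and_true])
    _ = ∏ i, ∏ j ∈ Ioi i, (g i j * g j i) := by
        rw [← Finset.prod_mul_distrib]
        refine Finset.prod_congr rfl fun i _ => ?_
        rw [← Finset.prod_mul_distrib]
        exact Finset.prod_congr rfl fun j _ => mul_comm _ _
    _ = ∏ i, ∏ j ∈ Ioi i,
        f (x i - x j) / f ((x i + (μ i : ℂ) * δ) - (x j + (μ j : ℂ) * δ)) := by
        refine Finset.prod_congr rfl fun i _ => Finset.prod_congr rfl fun j hj => ?_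
        rw [mem_Ioi] at hj
        have hij : i ≠ j := hj.ne
        have key := pair_identity f hodd δ (x i - x j) (μ i) (μ j)
          (fun r hr => hne2 i j hij r hr)
          (fun r hr => by
            have h := hne2 j i hij.symm r hr
            rwa [show x j - x i + δ + (r : ℂ) * δ
                = -(x i - x j) + δ + (r : ℂ) * δ by ring] at h)
          (by
            have h := hne3 i j hij
            rwa [show (x i + (μ i : ℂ) * δ) - (x j + (μ j : ℂ) * δ)
                = x i - x j + ((μ i : ℂ) - μ j) * δ by ring] at h)
        simp only [hg]
        rw [show x j - x i - (μ i : ℂ) * δ = -(x i - x j) - (μ i : ℂ) * δ by ring,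
          show x j - x i + δ = -(x i - x j) + δ by ring, key,
          show x i - x j + ((μ i : ℂ) - μ j) * δ
            = (x i + (μ i : ℂ) * δ) - (x j + (μ j : ℂ) * δ) by ring]
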